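/- Let n = 2N with N ≥ 2, h = 1/n, and let z₁, z₂ ∈ ℂ. Set Ã^h = L^h − z₁ I (size n−1) and Ã^{2h} = L^{2h} − z₂ I (size N−1), and assume Ã^{2h} is invertible. Define the two-grid correction operator TG = I − P (Ã^{2h})⁻¹ R Ã^h. Then for every l with 1 ≤ l ≤ N−1, writing λ_l^h = 4n² sin²(lπ/(2n)) − z₁ and λ_l^{2h} = n² sin²(lπ/n) − z₂, one has TG w_l^h = w_l^h − c_l (λ_l^h / λ_l^{2h}) (c_l w_l^h − s_l w_{n−l}^h), where c_l = cos²(lπ/(2n)) and s_l = sin²(lπ/(2n)). -/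

import Mathlib

open Real Matrix Complex

/-- The one-dimensional discrete Dirichlet Laplacian on `m` intervals with grid
spacing `δ`, as a complex `(m-1)×(m-1)` matrix: diagonal entries `2/δ²`,
first sub- and superdiagonal entries `-1/δ²`, all other entries zero. -/
noncomputable def dLapC (m : ℕ) (δ : ℝ) : Matrix (Fin (m - 1)) (Fin (m - 1)) ℂ :=
  Matrix.of fun i j =>
    if (i : ℕ) = (j : ℕ) then 2 / (δ : ℂ) ^ 2
    else if (i : ℕ) + 1 = (j : ℕ) ∨ (j : ℕ) + 1 = (i : ℕ) then -(1 / (δ : ℂ) ^ 2)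
    else 0

/-- Fine-grid Fourier mode `w_l^h ∈ ℂ^{n-1}`, `n = 2N`: components `sin (l j π / (2N))`. -/
noncomputable def fineModeC (N l : ℕ) : Fin (2 * N - 1) → ℂ :=
  fun j => (Real.sin (l * ((j : ℕ) + 1) * Real.pi / (2 * N)) : ℂ)

/-- Full-weighting restriction `R`, the `(N-1)×(2N-1)` matrix with
`R_{i,2i-1} = R_{i,2i+1} = 1/4`, `R_{i,2i} = 1/2`. -/
noncomputable def fullWeightingC (N : ℕ) : Matrix (Fin (N - 1)) (Fin (2 * N - 1)) ℂ :=
  Matrix.of fun i j =>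
    if (j : ℕ) + 1 = 2 * ((i : ℕ) + 1) then 1 / 2
    else if (j : ℕ) + 2 = 2 * ((i : ℕ) + 1) ∨ (j : ℕ) = 2 * ((i : ℕ) + 1) then 1 / 4
    else 0

/-- Linear interpolation `P`, the `(2N-1)×(N-1)` matrix with `P_{2i,i} = 1`,
`P_{2i-1,i} = P_{2i+1,i} = 1/2`. -/
noncomputable def linInterpC (N : ℕ) : Matrix (Fin (2 * N - 1)) (Fin (N - 1)) ℂ :=
  Matrix.of fun j i =>
    if (j : ℕ) + 1 = 2 * ((i : ℕ) + 1) then 1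
    else if (j : ℕ) + 2 = 2 * ((i : ℕ) + 1) ∨ (j : ℕ) = 2 * ((i : ℕ) + 1) then 1 / 2
    else 0

noncomputable def coarseModeC (N l : ℕ) : Fin (N - 1) → ℂ :=
  fun i => (Real.sin (l * ((i : ℕ) + 1) * Real.pi / N) : ℂ)

lemma sum_ind {m : ℕ} (t : ℕ) (b : ℂ) (g : ℕ → ℂ)
    (hg : m ≤ t → g t = 0) :
    ∑ k : Fin m, (if (k : ℕ) = t then b else 0) * g (k : ℕ) = b * g t := by
  by_cases ht : t < m
  · rw [Finset.sum_eq_single ⟨t, ht⟩]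
    · simp
    · intro k _ hk
      rw [if_neg, zero_mul]
      simpa [Fin.ext_iff] using hk
    · intro hmem; exact absurd (Finset.mem_univ _) hmem
  · rw [hg (le_of_not_gt ht), mul_zero]
    apply Finset.sum_eq_zero
    intro k _
    rw [if_neg, zero_mul]
    have := k.isLt; omega

lemma tri_sum {m : ℕ} (a b z : ℂ) (W : ℕ → ℂ) (hW0 : W 0 = 0) (hWm : W m = 0)
    (j : Fin (m - 1)) :
    ∑ k : Fin (m - 1),
      ((if (j : ℕ) = (k : ℕ) then a
          else if (j : ℕ) + 1 = (k : ℕ) ∨ (k : ℕ) + 1 = (j : ℕ) then b else 0)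
        - z * (if j = k then 1 else 0)) * W ((k : ℕ) + 1)
      = (a - z) * W ((j : ℕ) + 1) + b * W ((j : ℕ) + 2) + b * W (j : ℕ) := by
  have hj := j.isLt
  have key : ∀ k : Fin (m - 1),
      ((if (j : ℕ) = (k : ℕ) then a
          else if (j : ℕ) + 1 = (k : ℕ) ∨ (k : ℕ) + 1 = (j : ℕ) then b else 0)
        - z * (if j = k then 1 else 0))
      = (if (k : ℕ) = (j : ℕ) then a - z else 0)
        + (if (k : ℕ) = (j : ℕ) + 1 then b else 0)
        + (if (k : ℕ) + 1 = (j : ℕ) then b else 0) := by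
    intro k
    simp only [Fin.ext_iff]
    split_ifs <;> first | (exfalso; omega) | ring
  simp only [key, add_mul]
  rw [Finset.sum_add_distrib, Finset.sum_add_distrib]
  have h1 := sum_ind (m := m - 1) (j : ℕ) (a - z) (fun k => W (k + 1))
    (fun hle => absurd hj (by omega))
  have h2 := sum_ind (m := m - 1) ((j : ℕ) + 1) b (fun k => W (k + 1))
    (fun hle => by rw [show (j : ℕ) + 1 + 1 = m by omega, hWm])
  rw [h1, h2]
  congr 1
  rcases Nat.eq_zero_or_pos (j : ℕ) with h0 | h0
  · rw [h0, hW0, mul_zero]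
    apply Finset.sum_eq_zero
    intro k _
    rw [if_neg (by omega), zero_mul]
  · have h3 := sum_ind (m := m - 1) ((j : ℕ) - 1) b (fun k => W (k + 1))
      (fun hle => absurd hj (by omega))
    have heq : ∀ k : Fin (m - 1),
        (if (k : ℕ) + 1 = (j : ℕ) then b else 0) * W ((k : ℕ) + 1)
        = (if (k : ℕ) = (j : ℕ) - 1 then b else 0) * W ((k : ℕ) + 1) := by
      intro k; congr 1; apply if_congr (by omega) rfl rfl
    rw [Finset.sum_congr rfl (fun k _ => heq k), h3,
      show (j : ℕ) - 1 + 1 = (j : ℕ) by omega]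

lemma L_core (φ x : ℝ) :
    2 * Real.sin x - Real.sin (x - 2*φ) - Real.sin (x + 2*φ)
      = 4 * Real.sin φ ^ 2 * Real.sin x := by
  rw [Real.sin_add, Real.sin_sub, Real.cos_two_mul']
  linear_combination (-2) * Real.sin x * (Real.sin_sq_add_cos_sq φ)

lemma R_core (φ x : ℝ) :
    (1/2) * Real.sin x + (1/4) * Real.sin (x - 2*φ) + (1/4) * Real.sin (x + 2*φ)
      = Real.cos φ ^ 2 * Real.sin x := by
  rw [Real.sin_add, Real.sin_sub, Real.cos_sq]
  ring

lemma P_odd_core (r : ℕ) (φ x : ℝ) :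
    (1/2) * Real.sin (x - 2*φ) + (1/2) * Real.sin (x + 2*φ)
      = Real.cos φ ^ 2 * Real.sin x
        - Real.sin φ ^ 2 * Real.sin ((2*(r:ℝ)+1) * Real.pi - x) := by
  rw [show (2*(r:ℝ)+1) * Real.pi - x = (Real.pi - x) + r * (2*Real.pi) by ring,
    Real.sin_add_nat_mul_two_pi, Real.sin_pi_sub, Real.sin_add, Real.sin_sub,
    Real.cos_two_mul']
  ring

lemma P_even_core (r : ℕ) (φ x : ℝ) :
    Real.sin x
      = Real.cos φ ^ 2 * Real.sin x
        - Real.sin φ ^ 2 * Real.sin ((2*(r:ℝ)+2) * Real.pi - x) := by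
  rw [show (2*(r:ℝ)+2) * Real.pi - x = (-x) + (r+1) * (2*Real.pi) by push_cast; ring]
  rw [show ((r:ℝ)+1) = ((r+1 : ℕ) : ℝ) by push_cast; ring, Real.sin_add_nat_mul_two_pi,
    Real.sin_neg]
  linear_combination (-1) * Real.sin x * (Real.sin_sq_add_cos_sq φ)

lemma eigen_gen (m : ℕ) (δ : ℝ) (z lam : ℂ) (W : ℕ → ℂ) (hW0 : W 0 = 0) (hWm : W m = 0)
    (hrec : ∀ j : ℕ, (2/(δ:ℂ)^2 - z) * W (j+1) + (-(1/(δ:ℂ)^2)) * W (j+2)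
        + (-(1/(δ:ℂ)^2)) * W j = lam * W (j+1)) :
    (dLapC m δ - z • 1).mulVec (fun j : Fin (m-1) => W ((j:ℕ)+1))
      = lam • (fun j : Fin (m-1) => W ((j:ℕ)+1)) := by
  funext j
  have hs := tri_sum (m := m) (2/(δ:ℂ)^2) (-(1/(δ:ℂ)^2)) z W hW0 hWm j
  simp only [Matrix.mulVec, dotProduct, dLapC, Matrix.sub_apply, Matrix.smul_apply,
    Matrix.one_apply, Matrix.of_apply, smul_eq_mul, Pi.smul_apply]
  rw [hs]
  linear_combination hrec (j : ℕ)

lemma fine_eigen (N l : ℕ) (hN : 2 ≤ N) (h : ℝ) (hh : h = 1/(2*N)) (z₁ : ℂ) :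
    (dLapC (2*N) h - z₁ • 1).mulVec (fineModeC N l)
      = (4 * ((2*N:ℕ):ℂ)^2 * (Real.sin (l * Real.pi / (2*(2*N))) : ℂ)^2 - z₁)
          • fineModeC N l := by
  have hN0 : (N:ℝ) ≠ 0 := Nat.cast_ne_zero.mpr (by omega)
  have hNc : (N:ℂ) ≠ 0 := Nat.cast_ne_zero.mpr (by omega)
  set W : ℕ → ℂ := fun k => ((Real.sin (l * (k:ℝ) * Real.pi / (2*N)) : ℝ) : ℂ) with hW
  have hfm : fineModeC N l = fun j : Fin (2*N-1) => W ((j:ℕ)+1) := by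
    funext j
    simp only [fineModeC, hW]
    push_cast
    ring_nf
  have hW0 : W 0 = 0 := by simp [hW]
  have hWm : W (2*N) = 0 := by
    simp only [hW]
    rw [show (l:ℝ) * ((2*N : ℕ):ℝ) * Real.pi / (2*(N:ℝ)) = l * Real.pi by
      push_cast; field_simp]
    exact_mod_cast congrArg Complex.ofReal (Real.sin_nat_mul_pi l)
  rw [hfm]
  apply eigen_gen _ _ _ _ W hW0 hWm
  intro j
  have hc2 : (1:ℂ)/(h:ℂ)^2 = (2*(N:ℂ))^2 := by
    rw [hh]; push_cast; field_simp
  have hc1 : (2:ℂ)/(h:ℂ)^2 = 2*(2*(N:ℂ))^2 := by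
    rw [div_eq_mul_one_div, hc2]
  rw [hc1, hc2]
  simp only [hW]
  push_cast
  rw [show (l:ℂ)*((j:ℂ)+2)*(Real.pi:ℂ)/(2*(N:ℂ))
        = (l:ℂ)*((j:ℂ)+1)*(Real.pi:ℂ)/(2*(N:ℂ)) + 2*((l:ℂ)*(Real.pi:ℂ)/(2*(2*(N:ℂ)))) by
      field_simp; ring]
  rw [show (l:ℂ)*(j:ℂ)*(Real.pi:ℂ)/(2*(N:ℂ))
        = (l:ℂ)*((j:ℂ)+1)*(Real.pi:ℂ)/(2*(N:ℂ)) - 2*((l:ℂ)*(Real.pi:ℂ)/(2*(2*(N:ℂ)))) by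
      field_simp; ring]
  have keyC := congrArg Complex.ofReal
    (L_core ((l:ℝ)*Real.pi/(2*(2*(N:ℝ)))) ((l:ℝ)*((j:ℝ)+1)*Real.pi/(2*(N:ℝ))))
  push_cast at keyC
  linear_combination (2*(N:ℂ))^2 * keyC

lemma coarse_eigen (N l : ℕ) (hN : 2 ≤ N) (h : ℝ) (hh : h = 1/(2*N)) (z₂ : ℂ) :
    (dLapC N (2*h) - z₂ • 1).mulVec (coarseModeC N l)
      = (((2*N:ℕ):ℂ)^2 * (Real.sin (l * Real.pi / (2*N)) : ℂ)^2 - z₂)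
          • coarseModeC N l := by
  have hN0 : (N:ℝ) ≠ 0 := Nat.cast_ne_zero.mpr (by omega)
  have hNc : (N:ℂ) ≠ 0 := Nat.cast_ne_zero.mpr (by omega)
  set W : ℕ → ℂ := fun k => ((Real.sin (l * (k:ℝ) * Real.pi / N) : ℝ) : ℂ) with hW
  have hfm : coarseModeC N l = fun j : Fin (N-1) => W ((j:ℕ)+1) := by
    funext j
    simp only [coarseModeC, hW]
    push_cast
    ring_nf
  have hW0 : W 0 = 0 := by simp [hW]
  have hWm : W N = 0 := by
    simp only [hW]
    rw [show (l:ℝ) * ((N : ℕ):ℝ) * Real.pi / ((N:ℝ)) = l * Real.pi by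
      field_simp]
    exact_mod_cast congrArg Complex.ofReal (Real.sin_nat_mul_pi l)
  rw [hfm]
  apply eigen_gen _ _ _ _ W hW0 hWm
  intro j
  have hc2 : (1:ℂ)/((2*h:ℝ):ℂ)^2 = ((N:ℂ))^2 := by
    rw [hh]; push_cast; field_simp
  have hc1 : (2:ℂ)/((2*h:ℝ):ℂ)^2 = 2*((N:ℂ))^2 := by
    rw [div_eq_mul_one_div, hc2]
  rw [hc1, hc2]
  simp only [hW]
  push_cast
  rw [show (l:ℂ)*((j:ℂ)+2)*(Real.pi:ℂ)/((N:ℂ))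
        = (l:ℂ)*((j:ℂ)+1)*(Real.pi:ℂ)/((N:ℂ)) + 2*((l:ℂ)*(Real.pi:ℂ)/(2*(N:ℂ))) by
      field_simp; ring]
  rw [show (l:ℂ)*(j:ℂ)*(Real.pi:ℂ)/((N:ℂ))
        = (l:ℂ)*((j:ℂ)+1)*(Real.pi:ℂ)/((N:ℂ)) - 2*((l:ℂ)*(Real.pi:ℂ)/(2*(N:ℂ))) by
      field_simp; ring]
  have keyC := congrArg Complex.ofReal
    (L_core ((l:ℝ)*Real.pi/(2*(N:ℝ))) ((l:ℝ)*((j:ℝ)+1)*Real.pi/((N:ℝ))))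
  push_cast at keyC
  linear_combination ((N:ℂ))^2 * keyC

lemma R_mode (N l : ℕ) (hN : 2 ≤ N) :
    (fullWeightingC N).mulVec (fineModeC N l)
      = ((Real.cos (l * Real.pi / (2 * (2 * N))) : ℂ)^2) • coarseModeC N l := by
  have hN0 : (N:ℝ) ≠ 0 := Nat.cast_ne_zero.mpr (by omega)
  funext i
  have hi := i.isLt
  simp only [Matrix.mulVec, dotProduct, fullWeightingC, Matrix.of_apply, fineModeC,
    Pi.smul_apply, smul_eq_mul, coarseModeC]
  have dec : ∀ k : Fin (2*N-1),
      (if (k:ℕ)+1 = 2*((i:ℕ)+1) then (1/2:ℂ)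
        else if (k:ℕ)+2 = 2*((i:ℕ)+1) ∨ (k:ℕ) = 2*((i:ℕ)+1) then 1/4 else 0)
      = (if (k:ℕ) = 2*(i:ℕ)+1 then (1/2:ℂ) else 0)
        + (if (k:ℕ) = 2*(i:ℕ) then (1/4:ℂ) else 0)
        + (if (k:ℕ) = 2*(i:ℕ)+2 then (1/4:ℂ) else 0) := by
    intro k; split_ifs <;> first | (exfalso; omega) | ring
  simp only [dec, add_mul, Finset.sum_add_distrib]
  have h1 := sum_ind (m := 2*N-1) (2*(i:ℕ)+1) (1/2)
    (fun k => ((Real.sin (l * ((k:ℝ) + 1) * Real.pi / (2 * N)) : ℝ) : ℂ))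
    (fun hle => absurd hi (by omega))
  have h2 := sum_ind (m := 2*N-1) (2*(i:ℕ)) (1/4)
    (fun k => ((Real.sin (l * ((k:ℝ) + 1) * Real.pi / (2 * N)) : ℝ) : ℂ))
    (fun hle => absurd hi (by omega))
  have h3 := sum_ind (m := 2*N-1) (2*(i:ℕ)+2) (1/4)
    (fun k => ((Real.sin (l * ((k:ℝ) + 1) * Real.pi / (2 * N)) : ℝ) : ℂ))
    (fun hle => absurd hi (by omega))
  push_cast at h1 h2 h3 ⊢
  rw [h1, h2, h3]
  rw [show (l:ℂ)*(2*(i:ℂ)+1+1)*(Real.pi:ℂ)/(2*(N:ℂ))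
        = (l:ℂ)*(2*(i:ℂ)+2)*(Real.pi:ℂ)/(2*(N:ℂ)) by ring_nf]
  rw [show (l:ℂ)*(2*(i:ℂ)+1)*(Real.pi:ℂ)/(2*(N:ℂ))
        = (l:ℂ)*(2*(i:ℂ)+2)*(Real.pi:ℂ)/(2*(N:ℂ)) - 2*((l:ℂ)*(Real.pi:ℂ)/(2*(2*(N:ℂ)))) by
      have hNc : (N:ℂ) ≠ 0 := Nat.cast_ne_zero.mpr (by omega); field_simp; ring]
  rw [show (l:ℂ)*(2*(i:ℂ)+2+1)*(Real.pi:ℂ)/(2*(N:ℂ))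
        = (l:ℂ)*(2*(i:ℂ)+2)*(Real.pi:ℂ)/(2*(N:ℂ)) + 2*((l:ℂ)*(Real.pi:ℂ)/(2*(2*(N:ℂ)))) by
      have hNc : (N:ℂ) ≠ 0 := Nat.cast_ne_zero.mpr (by omega); field_simp]
  rw [show (l:ℂ)*((i:ℂ)+1)*(Real.pi:ℂ)/((N:ℂ))
        = (l:ℂ)*(2*(i:ℂ)+2)*(Real.pi:ℂ)/(2*(N:ℂ)) by
      have hNc : (N:ℂ) ≠ 0 := Nat.cast_ne_zero.mpr (by omega); field_simp]
  have keyC := congrArg Complex.ofReal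
    (R_core ((l:ℝ)*Real.pi/(2*(2*(N:ℝ)))) ((l:ℝ)*(2*(i:ℝ)+2)*Real.pi/(2*(N:ℝ))))
  push_cast at keyC
  linear_combination keyC

lemma P_mode (N l : ℕ) (hN : 2 ≤ N) (hl : l ≤ 2*N) :
    (linInterpC N).mulVec (coarseModeC N l)
      = ((Real.cos (l * Real.pi / (2 * (2 * N))) : ℂ)^2) • fineModeC N l
        - ((Real.sin (l * Real.pi / (2 * (2 * N))) : ℂ)^2) • fineModeC N (2*N - l) := by
  have hNc : (N:ℂ) ≠ 0 := Nat.cast_ne_zero.mpr (by omega)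
  funext j
  have hj := j.isLt
  simp only [Matrix.mulVec, dotProduct, linInterpC, Matrix.of_apply, coarseModeC,
    fineModeC, Pi.sub_apply, Pi.smul_apply, smul_eq_mul]
  rcases Nat.even_or_odd (j:ℕ) with ⟨r, hr⟩ | ⟨r, hr⟩
  · -- even j = r + r, fine point index 2r+1
    have hrN : r ≤ N - 1 := by omega
    have dec : ∀ k : Fin (N-1),
        (if (j:ℕ)+1 = 2*((k:ℕ)+1) then (1:ℂ)
          else if (j:ℕ)+2 = 2*((k:ℕ)+1) ∨ (j:ℕ) = 2*((k:ℕ)+1) then 1/2 else 0)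
        = (if (k:ℕ) = r then (1/2:ℂ) else 0)
          + (if (k:ℕ)+1 = r then (1/2:ℂ) else 0) := by
      intro k; split_ifs <;> first | (exfalso; omega) | ring
    simp only [dec, add_mul, Finset.sum_add_distrib]
    have h1 := sum_ind (m := N-1) r (1/2)
      (fun k => ((Real.sin (l * ((k:ℝ) + 1) * Real.pi / N) : ℝ) : ℂ))
      (fun hle => by
        have hrN' : r = N - 1 := by omega
        rw [show ((r:ℝ) + 1) = (N:ℝ) by
          rw [hrN', Nat.cast_sub (show 1 ≤ N by omega)]; push_cast; ring]
        rw [show (l:ℝ) * (N:ℝ) * Real.pi / (N:ℝ) = l * Real.pi by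
          have : (N:ℝ) ≠ 0 := Nat.cast_ne_zero.mpr (by omega)
          field_simp]
        exact_mod_cast congrArg Complex.ofReal (Real.sin_nat_mul_pi l))
    push_cast [Nat.cast_sub hl] at h1 ⊢
    rw [hr]
    push_cast at h1 ⊢
    rw [h1]
    have h2 : ∑ k : Fin (N-1), (if (k:ℕ)+1 = r then (1/2:ℂ) else 0)
          * Complex.sin ((l:ℂ) * ((k:ℂ) + 1) * (Real.pi:ℂ) / (N:ℂ))
        = (1/2:ℂ) * Complex.sin ((l:ℂ)*((r:ℂ)+(r:ℂ)+1)*(Real.pi:ℂ)/(2*(N:ℂ))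
            - 2*((l:ℂ)*(Real.pi:ℂ)/(2*(2*(N:ℂ))))) := by
      by_cases hr0 : r = 0
      · subst hr0
        rw [Finset.sum_eq_zero (fun k _ => by rw [if_neg (by omega), zero_mul])]
        have harg : ((l:ℂ)*(((0:ℕ):ℂ)+((0:ℕ):ℂ)+1)*(Real.pi:ℂ)/(2*(N:ℂ))
            - 2*((l:ℂ)*(Real.pi:ℂ)/(2*(2*(N:ℂ))))) = 0 := by
          push_cast; field_simp; ring
        rw [harg, Complex.sin_zero, mul_zero]
      · have h3 := sum_ind (m := N-1) (r-1) (1/2)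
          (fun k => ((Real.sin (l * ((k:ℝ) + 1) * Real.pi / N) : ℝ) : ℂ))
          (fun hle => absurd hrN (by omega))
        push_cast at h3
        rw [Finset.sum_congr rfl (fun k _ => by
          rw [if_congr (show (k:ℕ)+1 = r ↔ (k:ℕ) = r-1 by omega) rfl rfl]), h3]
        congr 2
        rw [Nat.cast_sub (show 1 ≤ r by omega)]
        push_cast
        field_simp
        ring
    rw [h2]
    rw [show (l:ℂ)*((r:ℂ)+1)*(Real.pi:ℂ)/(N:ℂ)
          = (l:ℂ)*((r:ℂ)+(r:ℂ)+1)*(Real.pi:ℂ)/(2*(N:ℂ))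
            + 2*((l:ℂ)*(Real.pi:ℂ)/(2*(2*(N:ℂ)))) by field_simp; ring]
    rw [show (2*(N:ℂ)-(l:ℂ))*((r:ℂ)+(r:ℂ)+1)*(Real.pi:ℂ)/(2*(N:ℂ))
          = (2*(r:ℂ)+1)*(Real.pi:ℂ)
            - (l:ℂ)*((r:ℂ)+(r:ℂ)+1)*(Real.pi:ℂ)/(2*(N:ℂ)) by field_simp; ring]
    have keyC := congrArg Complex.ofReal
      (P_odd_core r ((l:ℝ)*Real.pi/(2*(2*(N:ℝ))))
        ((l:ℝ)*((r:ℝ)+(r:ℝ)+1)*Real.pi/(2*(N:ℝ))))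
    push_cast at keyC
    linear_combination keyC
  · -- odd j = 2r+1, fine point index 2r+2
    have dec : ∀ k : Fin (N-1),
        (if (j:ℕ)+1 = 2*((k:ℕ)+1) then (1:ℂ)
          else if (j:ℕ)+2 = 2*((k:ℕ)+1) ∨ (j:ℕ) = 2*((k:ℕ)+1) then 1/2 else 0)
        = (if (k:ℕ) = r then (1:ℂ) else 0) := by
      intro k; split_ifs <;> first | (exfalso; omega) | ring
    simp only [dec]
    have h1 := sum_ind (m := N-1) r (1)
      (fun k => ((Real.sin (l * ((k:ℝ) + 1) * Real.pi / N) : ℝ) : ℂ))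
      (fun hle => absurd hj (by omega))
    push_cast [Nat.cast_sub hl] at h1 ⊢
    rw [hr]
    push_cast at h1 ⊢
    rw [h1]
    rw [show (l:ℂ)*((r:ℂ)+1)*(Real.pi:ℂ)/(N:ℂ)
          = (l:ℂ)*(2*(r:ℂ)+1+1)*(Real.pi:ℂ)/(2*(N:ℂ)) by field_simp; ring]
    rw [show (2*(N:ℂ)-(l:ℂ))*(2*(r:ℂ)+1+1)*(Real.pi:ℂ)/(2*(N:ℂ))
          = (2*(r:ℂ)+2)*(Real.pi:ℂ)
            - (l:ℂ)*(2*(r:ℂ)+1+1)*(Real.pi:ℂ)/(2*(N:ℂ)) by field_simp; ring]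
    have keyC := congrArg Complex.ofReal
      (P_even_core r ((l:ℝ)*Real.pi/(2*(2*(N:ℝ))))
        ((l:ℝ)*(2*(r:ℝ)+1+1)*Real.pi/(2*(N:ℝ))))
    push_cast at keyC
    linear_combination keyC

/-- action of the two-grid correction operator
`TG = I − P (Ã^{2h})⁻¹ R Ã^h` (with `Ã^h = L^h − z₁ I`, `Ã^{2h} = L^{2h} − z₂ I`,
`Ã^{2h}` invertible) on a smooth fine-grid Fourier mode `w_l^h`, `1 ≤ l ≤ N−1`:
`TG w_l^h = w_l^h − c_l (λ_l^h / λ_l^{2h}) (c_l w_l^h − s_l w_{n−l}^h)`. -/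
theorem twoGrid_smooth_mode (N : ℕ) (hN : 2 ≤ N) (h : ℝ) (hh : h = 1 / (2 * N))
    (z₁ z₂ : ℂ)
    (hinv : IsUnit (dLapC N (2 * h) - z₂ • (1 : Matrix (Fin (N - 1)) (Fin (N - 1)) ℂ)).det) :
    ∀ l : ℕ, 1 ≤ l → l ≤ N - 1 →
      (1 - linInterpC N * (dLapC N (2 * h) - z₂ • 1)⁻¹ * fullWeightingC N
            * (dLapC (2 * N) h - z₁ • 1)).mulVec (fineModeC N l)
        = fineModeC N l
          - ((Real.cos (l * Real.pi / (2 * (2 * N))) : ℂ) ^ 2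
              * ((4 * ((2 * N : ℕ) : ℂ) ^ 2 * (Real.sin (l * Real.pi / (2 * (2 * N))) : ℂ) ^ 2 - z₁)
                / (((2 * N : ℕ) : ℂ) ^ 2 * (Real.sin (l * Real.pi / (2 * N)) : ℂ) ^ 2 - z₂)))
            • ((Real.cos (l * Real.pi / (2 * (2 * N))) : ℂ) ^ 2 • fineModeC N l
                - (Real.sin (l * Real.pi / (2 * (2 * N))) : ℂ) ^ 2 • fineModeC N (2 * N - l)) := by
  intro l hl1 hl2
  have hA1 := fine_eigen N l hN h hh z₁
  have hA2e := coarse_eigen N l hN h hh z₂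
  have hRm := R_mode N l hN
  have hPm := P_mode N l hN (by omega)
  set u := coarseModeC N l with hu_def
  set v := fineModeC N l with hv_def
  set w := fineModeC N (2*N - l) with hw_def
  set c : ℂ := ((Real.cos (l * Real.pi / (2 * (2 * N))) : ℝ) : ℂ) ^ 2 with hc_def
  set s : ℂ := ((Real.sin (l * Real.pi / (2 * (2 * N))) : ℝ) : ℂ) ^ 2 with hs_def
  set lam1 : ℂ := 4 * ((2*N:ℕ):ℂ)^2 * ((Real.sin (l * Real.pi / (2*(2*N))) : ℝ) : ℂ)^2 - z₁
    with hlam1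
  set lam2 : ℂ := ((2*N:ℕ):ℂ)^2 * ((Real.sin (l * Real.pi / (2*N)) : ℝ) : ℂ)^2 - z₂
    with hlam2
  set A2 := dLapC N (2*h) - z₂ • (1 : Matrix (Fin (N-1)) (Fin (N-1)) ℂ) with hA2_def
  have hu0 : u ≠ 0 := by
    intro h0
    have h1 : u ⟨0, by omega⟩ = 0 := by rw [h0]; rfl
    rw [hu_def] at h1
    simp only [coarseModeC] at h1
    rw [Complex.ofReal_eq_zero] at h1
    have hpos : 0 < Real.sin ((l:ℝ) * (((0:ℕ):ℝ) + 1) * Real.pi / (N:ℝ)) := by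
      have hl0 : (0:ℝ) < (l:ℝ) := by exact_mod_cast hl1
      have hN0 : (0:ℝ) < (N:ℝ) := by exact_mod_cast (by omega : 0 < N)
      have hlN : (l:ℝ) < (N:ℝ) := by exact_mod_cast (by omega : l < N)
      apply Real.sin_pos_of_pos_of_lt_pi
      · have := Real.pi_pos
        push_cast
        positivity
      · push_cast
        rw [div_lt_iff₀ hN0]
        have := Real.pi_pos
        nlinarith
    rw [h1] at hpos
    exact lt_irrefl 0 hpos
  have hinv2 : A2⁻¹ * A2 = 1 := Matrix.nonsing_inv_mul _ hinv
  have hu : u = lam2 • A2⁻¹.mulVec u := by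
    conv_lhs => rw [← Matrix.one_mulVec u, ← hinv2, ← Matrix.mulVec_mulVec, hA2e,
      Matrix.mulVec_smul]
  have hlam2ne : lam2 ≠ 0 := by
    intro h0
    rw [h0, zero_smul] at hu
    exact hu0 hu
  have hinvu : A2⁻¹.mulVec u = lam2⁻¹ • u := by
    conv_rhs => rw [hu]
    rw [smul_smul, inv_mul_cancel₀ hlam2ne, one_smul]
  rw [Matrix.sub_mulVec, Matrix.one_mulVec, ← Matrix.mulVec_mulVec, ← Matrix.mulVec_mulVec,
    ← Matrix.mulVec_mulVec, hA1]
  simp only [Matrix.mulVec_smul]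
  rw [hRm]
  simp only [Matrix.mulVec_smul]
  rw [hinvu]
  simp only [Matrix.mulVec_smul]
  rw [hPm]
  congr 1
  rw [smul_smul, smul_smul]
  congr 1
  rw [div_eq_mul_inv]
  ring
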